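/- (Convexity of the Shapley uncertainty.) For every pair of N-player games G and H, every player i, and every α with 0 ≤ α ≤ 1, the Shapley uncertainty satisfies R_i(α·G + (1 − α)·H) ≤ α·R_i(G) + (1 − α)·R_i(H), where the game α·G + (1 − α)·H is defined coalitionwise. -/
import Mathlib


open Finset

noncomputable def shapleyWeight (N : ℕ) (S : Finset (Fin N)) : ℝ :=
  ((Nat.factorial S.card : ℝ) * (Nat.factorial (N - S.card - 1) : ℝ)) / (Nat.factorial N : ℝ)

noncomputable def marginal (N : ℕ) (G : Finset (Fin N) → ℝ) (i : Fin N)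
    (S : Finset (Fin N)) : ℝ :=
  G (insert i S) - G S

noncomputable def shapleyValue (N : ℕ) (G : Finset (Fin N) → ℝ) (i : Fin N) : ℝ :=
  ∑ S ∈ (Finset.univ.erase i).powerset, shapleyWeight N S * marginal N G i S

noncomputable def shapleyUncertainty (N : ℕ) (G : Finset (Fin N) → ℝ) (i : Fin N) : ℝ :=
  ∑ S ∈ (Finset.univ.erase i).powerset,
    shapleyWeight N S * (marginal N G i S - shapleyValue N G i) ^ 2

theorem shapley_uncertainty_convexity (N : ℕ) (hN : 1 ≤ N) (G H : Finset (Fin N) → ℝ)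
    (i : Fin N) (α : ℝ) (hα0 : 0 ≤ α) (hα1 : α ≤ 1) :
    shapleyUncertainty N (fun S => α * G S + (1 - α) * H S) i ≤
      α * shapleyUncertainty N G i + (1 - α) * shapleyUncertainty N H i := by
  have hw : ∀ S : Finset (Fin N), 0 ≤ shapleyWeight N S := by
    intro S
    unfold shapleyWeight
    positivity
  have hmarg : ∀ S, marginal N (fun S => α * G S + (1 - α) * H S) i S =
      α * marginal N G i S + (1 - α) * marginal N H i S := by
    intro S; unfold marginal; ring
  have hval : shapleyValue N (fun S => α * G S + (1 - α) * H S) i =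
      α * shapleyValue N G i + (1 - α) * shapleyValue N H i := by
    unfold shapleyValue
    rw [Finset.mul_sum, Finset.mul_sum, ← Finset.sum_add_distrib]
    refine Finset.sum_congr rfl fun S _ => ?_
    rw [hmarg]; ring
  unfold shapleyUncertainty
  rw [Finset.mul_sum, Finset.mul_sum, ← Finset.sum_add_distrib]
  refine Finset.sum_le_sum fun S _ => ?_
  rw [hmarg, hval]
  set a := marginal N G i S - shapleyValue N G i with ha
  set b := marginal N H i S - shapleyValue N H i with hb
  have key : (α * marginal N G i S + (1 - α) * marginal N H i S -
      (α * shapleyValue N G i + (1 - α) * shapleyValue N H i)) ^ 2 ≤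
      α * a ^ 2 + (1 - α) * b ^ 2 := by
    have h : α * marginal N G i S + (1 - α) * marginal N H i S -
        (α * shapleyValue N G i + (1 - α) * shapleyValue N H i) = α * a + (1 - α) * b := by
      rw [ha, hb]; ring
    rw [h]
    nlinarith [mul_nonneg (mul_nonneg hα0 (by linarith : (0:ℝ) ≤ 1 - α)) (sq_nonneg (a - b))]
  calc shapleyWeight N S * (α * marginal N G i S + (1 - α) * marginal N H i S -
        (α * shapleyValue N G i + (1 - α) * shapleyValue N H i)) ^ 2
      ≤ shapleyWeight N S * (α * a ^ 2 + (1 - α) * b ^ 2) :=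
        mul_le_mul_of_nonneg_left key (hw S)
    _ = α * (shapleyWeight N S * a ^ 2) + (1 - α) * (shapleyWeight N S * b ^ 2) := by ring
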